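/- Let τ : I* → O be a computation tree such that reps(t) divides rep(τ(t)) for every t ∈ I*. If τ is regular (has only finitely many distinct subtrees), then the symmetric completion τ' of τ is also regular. -/

import Mathlib

def rotL {AP : Type} [DecidableEq AP] (n : ℕ) (x : Finset (AP × ZMod n)) (k : ℤ) :
    Finset (AP × ZMod n) :=
  x.image (fun pj => (pj.1, pj.2 + (k : ZMod n)))

def rotW {AP : Type} [DecidableEq AP] (n : ℕ) (t : List (Finset (AP × ZMod n))) (k : ℤ) :
    List (Finset (AP × ZMod n)) :=
  t.map (fun x => rotL n x k)

/-- `η(t) = min_{0 ≤ i < n} rot(t,i)` with respect to the lexicographic order on words. -/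
def eta {AP : Type} [DecidableEq AP] (n : ℕ) [NeZero n]
    [LinearOrder (Finset (AP × ZMod n))] (t : List (Finset (AP × ZMod n))) :
    List (Finset (AP × ZMod n)) :=
  ((Finset.range n).image (fun i : ℕ => rotW n t ((i : ℤ)))).min'
    ((Finset.nonempty_range_iff.mpr (NeZero.ne n)).image _)

/-- A word is normalized if it equals the minimum of its rotations. -/
def normalized {AP : Type} [DecidableEq AP] (n : ℕ) [NeZero n]
    [LinearOrder (Finset (AP × ZMod n))] (t : List (Finset (AP × ZMod n))) : Prop :=
  eta n t = t

/-- The least `i ∈ {0,…,n−1}` with `rot(s,i) = t`. -/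
noncomputable def leastRotIdx {AP : Type} [DecidableEq AP] (n : ℕ)
    (s t : List (Finset (AP × ZMod n))) : ℕ := by
  classical
  exact if h : ∃ i : ℕ, i < n ∧ rotW n s ((i : ℤ)) = t then Nat.find h else 0

/-- The symmetric completion `τ'` of `τ`:
`τ'(t) = rot(τ(η(t)), i_t)` where `i_t` is the least `i ∈ {0,…,n−1}` with `rot(η(t),i) = t`. -/
noncomputable def symComp {AP_I AP_O : Type} [DecidableEq AP_I] [DecidableEq AP_O]
    (n : ℕ) [NeZero n] [LinearOrder (Finset (AP_I × ZMod n))]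
    (τ : List (Finset (AP_I × ZMod n)) → Finset (AP_O × ZMod n)) :
    List (Finset (AP_I × ZMod n)) → Finset (AP_O × ZMod n) :=
  fun t => rotL n (τ (eta n t)) ((leastRotIdx n (eta n t) t : ℤ))

def rep {AP : Type} [DecidableEq AP] (n : ℕ) (x : Finset (AP × ZMod n)) : ℕ :=
  ((Finset.range n).filter (fun j : ℕ => rotL n x ((j : ℤ)) = x)).card

def reps {AP : Type} [DecidableEq AP] (n : ℕ) (t : List (Finset (AP × ZMod n))) : ℕ :=
  t.foldl (fun a x => Nat.gcd a (rep n x)) n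

/-- A computation tree is regular if it has only finitely many distinct subtrees. -/
def regularTree {AP_I AP_O : Type} [DecidableEq AP_I] (n : ℕ)
    (τ : List (Finset (AP_I × ZMod n)) → Finset (AP_O × ZMod n)) : Prop :=
  {g : List (Finset (AP_I × ZMod n)) → Finset (AP_O × ZMod n) |
    ∃ t, g = fun t' => τ (t ++ t')}.Finite

set_option linter.unusedSectionVars false

/-! ### Auxiliary lemmas for `symComp_regular` -/

section ListLexAux
variable {α : Type} [LinearOrder α]

lemma lex_append_of_lt' : ∀ {a b : List α}, List.Lex (· < ·) a b → a.length = b.length →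
    ∀ c d : List α, List.Lex (· < ·) (a ++ c) (b ++ d)
  | _, _, List.Lex.nil, hlen, _, _ => by simp at hlen
  | _, _, List.Lex.cons h, hlen, c, d =>
      List.Lex.cons (lex_append_of_lt' h (by simpa using hlen) c d)
  | _, _, List.Lex.rel h, _, _, _ => List.Lex.rel h

lemma append_lt_append_of_lt' {a b : List α} (h : a < b) (hlen : a.length = b.length)
    (c d : List α) : a ++ c < b ++ d :=
  lex_append_of_lt' h hlen c d

lemma append_lt_append_left_iff' (a : List α) {c d : List α} :
    a ++ c < a ++ d ↔ c < d := by
  induction a with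
  | nil => exact Iff.rfl
  | cons x xs ih =>
    show List.Lex (· < ·) (x :: (xs ++ c)) (x :: (xs ++ d)) ↔ _
    rw [List.lex_cons_iff]
    exact ih

lemma append_le_append_left' {c d : List α} (h : c ≤ d) (a : List α) :
    a ++ c ≤ a ++ d := by
  rcases lt_or_eq_of_le h with h | h
  · exact le_of_lt ((append_lt_append_left_iff' a).mpr h)
  · simp [h]

end ListLexAux

section RotAux
variable {AP : Type} [DecidableEq AP] (n : ℕ)

def rotZ (x : Finset (AP × ZMod n)) (z : ZMod n) : Finset (AP × ZMod n) :=
  x.image (fun pj => (pj.1, pj.2 + z))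

lemma rotL_eq_rotZ (x : Finset (AP × ZMod n)) (k : ℤ) : rotL n x k = rotZ n x (k : ZMod n) := rfl

lemma rotZ_zero (x : Finset (AP × ZMod n)) : rotZ n x 0 = x := by
  simp [rotZ]

lemma rotZ_rotZ (x : Finset (AP × ZMod n)) (a b : ZMod n) :
    rotZ n (rotZ n x a) b = rotZ n x (a + b) := by
  rw [rotZ, rotZ, rotZ, Finset.image_image]
  congr 1
  funext pj
  simp [add_assoc]

def rotWZ (w : List (Finset (AP × ZMod n))) (z : ZMod n) : List (Finset (AP × ZMod n)) :=
  w.map (fun x => rotZ n x z)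

lemma rotW_eq_rotWZ (w : List (Finset (AP × ZMod n))) (k : ℤ) :
    rotW n w k = rotWZ n w (k : ZMod n) := rfl

lemma rotWZ_zero (w : List (Finset (AP × ZMod n))) : rotWZ n w 0 = w := by
  simp [rotWZ, rotZ_zero]

lemma rotWZ_rotWZ (w : List (Finset (AP × ZMod n))) (a b : ZMod n) :
    rotWZ n (rotWZ n w a) b = rotWZ n w (a + b) := by
  simp [rotWZ, rotZ_rotZ]

lemma rotWZ_append (t t' : List (Finset (AP × ZMod n))) (z : ZMod n) :
    rotWZ n (t ++ t') z = rotWZ n t z ++ rotWZ n t' z :=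
  List.map_append

lemma rotWZ_length (w : List (Finset (AP × ZMod n))) (z : ZMod n) :
    (rotWZ n w z).length = w.length :=
  List.length_map _

lemma rotWZ_cancel {t : List (Finset (AP × ZMod n))} {a b : ZMod n} :
    rotWZ n t a = rotWZ n t b ↔ rotWZ n t (a - b) = t := by
  constructor
  · intro h
    have h2 := congrArg (fun w => rotWZ n w (-b)) h
    simpa [rotWZ_rotWZ, sub_eq_add_neg, rotWZ_zero] using h2
  · intro h
    have h2 := congrArg (fun w => rotWZ n w b) h
    simpa [rotWZ_rotWZ, sub_add_cancel] using h2

end RotAux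

section EtaAux
variable {AP : Type} [DecidableEq AP] (n : ℕ) [NeZero n] [LinearOrder (Finset (AP × ZMod n))]

lemma natCast_int_zmod (i : ℕ) : (((i : ℤ)) : ZMod n) = (i : ZMod n) := by push_cast; rfl

lemma eta_exists (t : List (Finset (AP × ZMod n))) :
    ∃ i ∈ Finset.range n, eta n t = rotWZ n t (i : ZMod n) := by
  have h := Finset.min'_mem ((Finset.range n).image (fun i : ℕ => rotW n t ((i : ℤ))))
    ((Finset.nonempty_range_iff.mpr (NeZero.ne n)).image _)
  rw [Finset.mem_image] at h
  obtain ⟨i, hi, hEq⟩ := h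
  exact ⟨i, hi, by rw [eta, ← hEq, rotW_eq_rotWZ, natCast_int_zmod]⟩

lemma eta_le (t : List (Finset (AP × ZMod n))) {i : ℕ} (hi : i ∈ Finset.range n) :
    eta n t ≤ rotWZ n t (i : ZMod n) := by
  rw [← natCast_int_zmod, ← rotW_eq_rotWZ]
  exact Finset.min'_le _ _ (Finset.mem_image_of_mem _ hi)

lemma eta_length (t : List (Finset (AP × ZMod n))) : (eta n t).length = t.length := by
  obtain ⟨i, _, h⟩ := eta_exists n t
  rw [h, rotWZ_length]

lemma val_cast_zmod (z : ZMod n) : ((z.val : ℕ) : ZMod n) = z :=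
  ZMod.natCast_rightInverse z

lemma exists_rot_eta (t : List (Finset (AP × ZMod n))) :
    ∃ i : ℕ, i < n ∧ rotW n (eta n t) ((i : ℤ)) = t := by
  obtain ⟨i, hi, h⟩ := eta_exists n t
  refine ⟨(-(i : ZMod n)).val, ZMod.val_lt _, ?_⟩
  rw [rotW_eq_rotWZ, natCast_int_zmod, val_cast_zmod, h, rotWZ_rotWZ]
  simp [rotWZ_zero]

lemma leastRotIdx_spec (t : List (Finset (AP × ZMod n))) :
    leastRotIdx n (eta n t) t < n ∧
      rotWZ n (eta n t) ((leastRotIdx n (eta n t) t : ℕ) : ZMod n) = t := by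
  classical
  have h := exists_rot_eta n t
  rw [leastRotIdx, dif_pos h]
  have hs := Nat.find_spec h
  exact ⟨hs.1, by rw [← natCast_int_zmod, ← rotW_eq_rotWZ]; exact hs.2⟩

/-- The least rotation index of `t`, as an element of `ZMod n`. -/
noncomputable def i0z (t : List (Finset (AP × ZMod n))) : ZMod n :=
  ((leastRotIdx n (eta n t) t : ℕ) : ZMod n)

lemma rot_eta_i0 (t : List (Finset (AP × ZMod n))) : rotWZ n (eta n t) (i0z n t) = t :=
  (leastRotIdx_spec n t).2

lemma eta_eq_rot (t : List (Finset (AP × ZMod n))) : eta n t = rotWZ n t (-(i0z n t)) := by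
  have h := congrArg (fun w => rotWZ n w (-(i0z n t))) (rot_eta_i0 n t)
  simpa [rotWZ_rotWZ, rotWZ_zero] using h

/-- The stabilizer of a word under rotation, as a finite subset of `ZMod n`. -/
def stab (t : List (Finset (AP × ZMod n))) : Finset (ZMod n) :=
  Finset.univ.filter (fun z => rotWZ n t z = t)

lemma mem_stab {t : List (Finset (AP × ZMod n))} {z : ZMod n} :
    z ∈ stab n t ↔ rotWZ n t z = t := by simp [stab]

lemma stab_eta (t : List (Finset (AP × ZMod n))) : stab n (eta n t) = stab n t := by
  ext z
  rw [mem_stab, mem_stab]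
  conv_lhs => rw [eta_eq_rot n t]
  rw [rotWZ_rotWZ, rotWZ_cancel]
  simp

lemma rot_eq_eta_iff (t : List (Finset (AP × ZMod n))) (z : ZMod n) :
    rotWZ n t z = eta n t ↔ z + i0z n t ∈ stab n t := by
  rw [eta_eq_rot n t, rotWZ_cancel, mem_stab, sub_neg_eq_add]

lemma rot_eta_eq_self_iff (t : List (Finset (AP × ZMod n))) (z : ZMod n) :
    rotWZ n (eta n t) z = t ↔ z - i0z n t ∈ stab n t := by
  constructor
  · intro h
    rw [← stab_eta n t, mem_stab]
    have h2 : rotWZ n (eta n t) z = rotWZ n (eta n t) (i0z n t) := by rw [h, rot_eta_i0]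
    rwa [rotWZ_cancel] at h2
  · intro h
    rw [← stab_eta n t, mem_stab, ← rotWZ_cancel] at h
    rw [h, rot_eta_i0]

/-- The continuation of the normalization: the lexicographic minimum of the rotations of `t'`
by indices in the appropriate coset of the stabilizer. -/
noncomputable def sFun (Hz : Finset (ZMod n)) (i₀ : ZMod n)
    (t' : List (Finset (AP × ZMod n))) : List (Finset (AP × ZMod n)) :=
  if h : ((Hz.image (fun h => h - i₀)).image (fun z => rotWZ n t' z)).Nonempty
  then ((Hz.image (fun h => h - i₀)).image (fun z => rotWZ n t' z)).min' h
  else []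

lemma eta_append (t t' : List (Finset (AP × ZMod n))) :
    eta n (t ++ t') = eta n t ++ sFun n (stab n t) (i0z n t) t' := by
  classical
  have hC : ∀ z : ZMod n, z ∈ (stab n t).image (fun h => h - i0z n t) ↔
      rotWZ n t z = eta n t := by
    intro z
    rw [rot_eq_eta_iff]
    simp [Finset.mem_image, sub_eq_iff_eq_add]
  have hCne : ((stab n t).image (fun h => h - i0z n t)).Nonempty :=
    ⟨-(i0z n t), (hC _).mpr (eta_eq_rot n t).symm⟩
  have hFsne : (((stab n t).image (fun h => h - i0z n t)).image
      (fun z => rotWZ n t' z)).Nonempty := hCne.image _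
  have hsF : sFun n (stab n t) (i0z n t) t' =
      (((stab n t).image (fun h => h - i0z n t)).image (fun z => rotWZ n t' z)).min' hFsne := by
    rw [sFun, dif_pos hFsne]
  apply le_antisymm
  · -- eta (t ++ t') ≤ eta t ++ s
    have hmem := Finset.min'_mem _ hFsne
    rw [Finset.mem_image] at hmem
    obtain ⟨z₀, hz₀, hEq⟩ := hmem
    rw [hC] at hz₀
    have hle := eta_le n (t ++ t') (i := z₀.val) (Finset.mem_range.mpr (ZMod.val_lt z₀))
    rw [val_cast_zmod, rotWZ_append, hz₀] at hle
    rw [hsF, ← hEq] at *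
    exact hle
  · -- eta t ++ s ≤ eta (t ++ t')
    obtain ⟨i, hi, hEq⟩ := eta_exists n (t ++ t')
    rw [hEq, rotWZ_append]
    by_cases h1 : rotWZ n t (i : ZMod n) = eta n t
    · have hz : rotWZ n t' (i : ZMod n) ∈
          ((stab n t).image (fun h => h - i0z n t)).image (fun z => rotWZ n t' z) :=
        Finset.mem_image_of_mem _ ((hC _).mpr h1)
      have hle := Finset.min'_le _ _ hz
      rw [h1]
      rw [hsF]
      exact append_le_append_left' hle _
    · have hle := eta_le n t (i := i) hi
      exact le_of_lt (append_lt_append_of_lt'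
        (lt_of_le_of_ne hle (fun e => h1 e.symm))
        (by rw [eta_length, rotWZ_length]) _ _)

end EtaAux

open Classical in
/-- The parameterized family of candidate subtrees for the symmetric completion. -/
noncomputable def Gfun {AP_I AP_O : Type} [DecidableEq AP_I] [DecidableEq AP_O]
    (n : ℕ) [NeZero n] [LinearOrder (Finset (AP_I × ZMod n))]
    (σ : List (Finset (AP_I × ZMod n)) → Finset (AP_O × ZMod n))
    (Hz : Finset (ZMod n)) (i₀ : ZMod n) :
    List (Finset (AP_I × ZMod n)) → Finset (AP_O × ZMod n) := fun t' =>
  rotZ n (σ (sFun n Hz i₀ t'))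
    (((if h : ∃ j : ℕ, j < n ∧ ((j : ZMod n) - i₀ ∈ Hz ∧
        rotWZ n (sFun n Hz i₀ t') ((j : ZMod n)) = t')
      then Nat.find h else 0 : ℕ) : ZMod n))

lemma subtree_symComp {AP_I AP_O : Type} [DecidableEq AP_I] [DecidableEq AP_O]
    (n : ℕ) [NeZero n] [LinearOrder (Finset (AP_I × ZMod n))]
    (τ : List (Finset (AP_I × ZMod n)) → Finset (AP_O × ZMod n))
    (t : List (Finset (AP_I × ZMod n))) :
    (fun t' => symComp n τ (t ++ t')) =
      Gfun n (fun u => τ (eta n t ++ u)) (stab n t) (i0z n t) := by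
  classical
  funext t'
  set s := sFun n (stab n t) (i0z n t) t' with hs
  have hEta : eta n (t ++ t') = eta n t ++ s := eta_append n t t'
  have hiff : ∀ j : ℕ, (j < n ∧ rotW n (eta n (t ++ t')) ((j : ℤ)) = t ++ t') ↔
      (j < n ∧ ((j : ZMod n) - i0z n t ∈ stab n t ∧ rotWZ n s ((j : ZMod n)) = t')) := by
    intro j
    rw [rotW_eq_rotWZ, natCast_int_zmod, hEta, rotWZ_append]
    constructor
    · rintro ⟨hj, h⟩
      have hlen : (rotWZ n (eta n t) ((j : ZMod n))).length = t.length := by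
        rw [rotWZ_length, eta_length]
      obtain ⟨h1, h2⟩ := List.append_inj h hlen
      exact ⟨hj, (rot_eta_eq_self_iff n t _).mp h1, h2⟩
    · rintro ⟨hj, h1, h2⟩
      exact ⟨hj, by rw [(rot_eta_eq_self_iff n t _).mpr h1, h2]⟩
  have hex : ∃ j : ℕ, j < n ∧ rotW n (eta n (t ++ t')) ((j : ℤ)) = t ++ t' :=
    exists_rot_eta n (t ++ t')
  have hex2 : ∃ j : ℕ, j < n ∧ ((j : ZMod n) - i0z n t ∈ stab n t ∧
      rotWZ n s ((j : ZMod n)) = t') := by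
    obtain ⟨j, hj⟩ := hex
    exact ⟨j, (hiff j).mp hj⟩
  have hfind : leastRotIdx n (eta n (t ++ t')) (t ++ t') = Nat.find hex2 := by
    rw [leastRotIdx, dif_pos hex]
    exact le_antisymm (Nat.find_le ((hiff _).mpr (Nat.find_spec hex2)))
      (Nat.find_le ((hiff _).mp (Nat.find_spec hex)))
  show rotL n (τ (eta n (t ++ t'))) ((leastRotIdx n (eta n (t ++ t')) (t ++ t') : ℤ)) = _
  rw [rotL_eq_rotZ, natCast_int_zmod, hfind, hEta, Gfun, ← hs, dif_pos hex2]

/-- If `reps(t) ∣ rep(τ(t))` for every `t` and `τ` is regular, then the symmetric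
completion of `τ` is also regular. -/
theorem symComp_regular
    {AP_I AP_O : Type} [DecidableEq AP_I] [Fintype AP_I] [DecidableEq AP_O] [Fintype AP_O]
    (n : ℕ) [NeZero n] [LinearOrder (Finset (AP_I × ZMod n))]
    (τ : List (Finset (AP_I × ZMod n)) → Finset (AP_O × ZMod n))
    (hdvd : ∀ t, reps n t ∣ rep n (τ t))
    (hreg : regularTree n τ) :
    regularTree n (symComp n τ) := by
  classical
  have key : {g : List (Finset (AP_I × ZMod n)) → Finset (AP_O × ZMod n) |
      ∃ t, g = fun t' => symComp n τ (t ++ t')} ⊆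
      (fun p : (List (Finset (AP_I × ZMod n)) → Finset (AP_O × ZMod n)) ×
          Finset (ZMod n) × ZMod n => Gfun n p.1 p.2.1 p.2.2) ''
      ({g | ∃ t, g = fun t' => τ (t ++ t')} ×ˢ
        ((Set.univ : Set (Finset (ZMod n))) ×ˢ (Set.univ : Set (ZMod n)))) := by
    rintro g ⟨t, rfl⟩
    exact ⟨⟨fun u => τ (eta n t ++ u), stab n t, i0z n t⟩,
      ⟨⟨eta n t, rfl⟩, trivial, trivial⟩, (subtree_symComp n τ t).symm⟩
  exact Set.Finite.subset ((hreg.prod (Set.finite_univ.prod Set.finite_univ)).image _) key
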